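/- Let m ≥ 1. For every c : Fin m → ZMod 2 and every ε : ZMod 4, the function f : (Fin m → ZMod 2) → ZMod 4 given by f(x) = ∑ j, ((x j).val : ZMod 4) + 2 * ((∑ j, c j * x j).val : ZMod 4) + ε is bent: Complex.normSq (f̂ u) = 2^m for every u. (In words: the coset Q + ZRM(1,m), where Q(x) = x_0 + x_1 + ⋯ + x_{m−1} is the Z_4-valued quadratic form of the identity matrix, is a quaternary constant-amplitude code with 2^{m+2} codewords.) -/

import Mathlib

open Finset

private lemma I_pow_val_add (a b : ZMod 4) :
    Complex.I ^ (a + b).val = Complex.I ^ a.val * Complex.I ^ b.val := by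
  rw [ZMod.val_add, ← pow_eq_pow_mod _ Complex.I_pow_four, pow_add]

private lemma neg_one_pow_val_add (a b : ZMod 2) :
    (-1 : ℂ) ^ (a + b).val = (-1 : ℂ) ^ a.val * (-1 : ℂ) ^ b.val := by
  have h2 : (-1 : ℂ) ^ 2 = 1 := by norm_num
  rw [ZMod.val_add, ← pow_eq_pow_mod _ h2, pow_add]

private lemma I_pow_val_sum {ι : Type*} [DecidableEq ι] (s : Finset ι) (g : ι → ZMod 4) :
    Complex.I ^ (∑ j ∈ s, g j).val = ∏ j ∈ s, Complex.I ^ (g j).val := by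
  induction s using Finset.induction with
  | empty => simp
  | insert _ _ h ih => rw [Finset.sum_insert h, Finset.prod_insert h, I_pow_val_add, ih]

private lemma neg_one_pow_val_sum {ι : Type*} [DecidableEq ι] (s : Finset ι) (g : ι → ZMod 2) :
    (-1 : ℂ) ^ (∑ j ∈ s, g j).val = ∏ j ∈ s, (-1 : ℂ) ^ (g j).val := by
  induction s using Finset.induction with
  | empty => simp
  | insert _ _ h ih => rw [Finset.sum_insert h, Finset.prod_insert h, neg_one_pow_val_add, ih]

private lemma zmod_two_cases (s : ZMod 2) : s = 0 ∨ s = 1 := by revert s; decide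

private lemma I_pow_two_mul (s : ZMod 2) :
    Complex.I ^ (2 * ((s.val : ZMod 4))).val = (-1 : ℂ) ^ s.val := by
  rcases zmod_two_cases s with rfl | rfl
  · rw [show ((2 * (((0 : ZMod 2).val : ZMod 4))).val) = 0 from rfl,
      show ((0 : ZMod 2).val) = 0 from rfl, pow_zero, pow_zero]
  · rw [show ((2 * (((1 : ZMod 2).val : ZMod 4))).val) = 2 from rfl,
      show ((1 : ZMod 2).val) = 1 from rfl, Complex.I_sq, pow_one]

private lemma sum_zmod_two (g : ZMod 2 → ℂ) : ∑ b : ZMod 2, g b = g 0 + g 1 := by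
  rw [show (Finset.univ : Finset (ZMod 2)) = {0, 1} by decide]
  rw [Finset.sum_insert (by decide), Finset.sum_singleton]

private lemma factor_normSq (a : ZMod 2) :
    Complex.normSq (∑ b : ZMod 2, Complex.I ^ b.val * (-1 : ℂ) ^ ((a * b).val)) = 2 := by
  rw [sum_zmod_two, mul_zero, mul_one,
    show ((0 : ZMod 2).val) = 0 from rfl, show ((1 : ZMod 2).val) = 1 from rfl,
    pow_zero, pow_zero, pow_one, mul_one]
  rcases zmod_two_cases a with rfl | rfl <;>
    simp [show ((0 : ZMod 2).val) = 0 from rfl, show ((1 : ZMod 2).val) = 1 from rfl,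
      Complex.normSq_apply] <;> norm_num

/-- The Fourier transform of a `ZMod 4`-valued generalized Boolean function. -/
noncomputable def fourier4 {m : ℕ} (f : (Fin m → ZMod 2) → ZMod 4) (u : Fin m → ZMod 2) : ℂ :=
  ∑ x : Fin m → ZMod 2, Complex.I ^ (f x).val * (-1 : ℂ) ^ (∑ j, u j * x j).val

/-- Every word of the coset `Q + ZRM(1,m)`, where `Q(x) = x₀ + x₁ + ⋯ + x_{m-1}` is the
`ZMod 4`-valued quadratic form of the identity matrix, is bent: the coset is a quaternary
constant-amplitude code with `2^{m+2}` codewords. -/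
theorem stmt15 (m : ℕ) (hm : 1 ≤ m) (c : Fin m → ZMod 2) (ε : ZMod 4)
    (f : (Fin m → ZMod 2) → ZMod 4)
    (hf : ∀ x, f x = ∑ j, ((x j).val : ZMod 4) + 2 * ((∑ j, c j * x j).val : ZMod 4) + ε) :
    ∀ u, Complex.normSq (fourier4 f u) = 2 ^ m := by
  intro u
  have key : fourier4 f u =
      Complex.I ^ ε.val *
      ∏ j : Fin m, ∑ b : ZMod 2, Complex.I ^ b.val * (-1 : ℂ) ^ (((c j + u j) * b).val) := by
    rw [Finset.prod_univ_sum (fun _ => (Finset.univ : Finset (ZMod 2)))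
      (fun j b => Complex.I ^ b.val * (-1 : ℂ) ^ (((c j + u j) * b).val)),
      Fintype.piFinset_univ, Finset.mul_sum]
    unfold fourier4
    refine Finset.sum_congr rfl fun x _ => ?_
    have hval : ∀ j, (((x j).val : ZMod 4)).val = (x j).val := fun j =>
      ZMod.val_cast_of_lt (lt_trans (ZMod.val_lt (x j)) (by norm_num))
    have hcomb : (-1 : ℂ) ^ (∑ j, c j * x j).val * (-1 : ℂ) ^ (∑ j, u j * x j).val
        = ∏ j : Fin m, (-1 : ℂ) ^ (((c j + u j) * x j).val) := by
      rw [← neg_one_pow_val_add, ← Finset.sum_add_distrib, ← neg_one_pow_val_sum]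
      congr 2
      exact Finset.sum_congr rfl fun j _ => (add_mul _ _ _).symm
    rw [hf x, I_pow_val_add, I_pow_val_add, I_pow_val_sum, I_pow_two_mul,
      Finset.prod_mul_distrib, ← hcomb]
    simp only [hval]
    ring
  rw [key, map_mul, map_prod]
  have h1 : Complex.normSq (Complex.I ^ ε.val) = 1 := by
    rw [map_pow, Complex.normSq_I, one_pow]
  rw [h1, one_mul]
  calc (∏ j : Fin m, Complex.normSq (∑ b : ZMod 2,
          Complex.I ^ b.val * (-1 : ℂ) ^ (((c j + u j) * b).val)))
      = ∏ _j : Fin m, (2 : ℝ) := Finset.prod_congr rfl fun j _ => factor_normSq (c j + u j)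
    _ = 2 ^ m := by simp
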